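/- arXiv:2311.00222 — 2 statements merged into one kernel-verified Lean document; each statement's English description precedes it below -/
import Mathlib

section
/- Suppose n ≥ 2 and for each task q there is a unique dominating agent i* q, i.e., f (i* q) q > f j q for every agent j ≠ i* q. Then the weight game has exactly one Nash equilibrium, namely the matrix Ŵ with Ŵ i q = 1 if i = i* q and Ŵ i q = 0 otherwise. -/
open Finset Filter

noncomputable def fsMax (s : Finset ℝ) : ℝ := s.max.unbotD 0

noncomputable def fsMin (s : Finset ℝ) : ℝ := s.min.untopD 0

noncomputable def fsSubmax (s : Finset ℝ) : ℝ := fsMax (s.filter (fun x => x < fsMax s))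

/-- Agent `i` is dominating for task `q`. -/
def Dominating {n m : ℕ} (f : Fin n → Fin m → ℝ) (i : Fin n) (q : Fin m) : Prop :=
  ∀ j, f j q ≤ f i q

/-- Maximum of `g j` over all `j ≠ i` (0 if that set is empty). -/
noncomputable def maxErase {n : ℕ} (i : Fin n) (g : Fin n → ℝ) : ℝ :=
  fsMax ((Finset.univ.erase i).image g)

/-- Utility of agent `i` in the weight game. -/
noncomputable def Uutil {n m : ℕ} (f : Fin n → Fin m → ℝ) (w : Fin n → Fin m → ℝ)
    (i : Fin n) : ℝ :=
  ∑ q, (f i q * w i q - maxErase i (fun j => f j q * w j q) * w i q)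

/-- All entries of the matrix lie in `[0,1]`. -/
def InUnit {n m : ℕ} (w : Fin n → Fin m → ℝ) : Prop :=
  ∀ i q, w i q ∈ Set.Icc (0 : ℝ) 1

/-- Nash equilibrium of the weight game. -/
def IsNashW {n m : ℕ} (f : Fin n → Fin m → ℝ) (w : Fin n → Fin m → ℝ) : Prop :=
  ∀ i, ∀ w' : Fin m → ℝ, (∀ q, w' q ∈ Set.Icc (0 : ℝ) 1) →
    Uutil f (Function.update w i w') i ≤ Uutil f w i

lemma fsMax_eq_max' {s : Finset ℝ} (h : s.Nonempty) : fsMax s = s.max' h := by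
  rw [fsMax, ← Finset.coe_max' h, WithBot.unbotD_coe]

lemma erase_univ_nonempty {n : ℕ} (hn : 2 ≤ n) (i : Fin n) :
    ((Finset.univ : Finset (Fin n)).erase i).Nonempty := by
  obtain ⟨j, -, hj⟩ := Finset.exists_mem_ne
    (s := (Finset.univ : Finset (Fin n)))
    (by rw [Finset.card_univ, Fintype.card_fin]; omega) i
  exact ⟨j, Finset.mem_erase.2 ⟨hj, Finset.mem_univ j⟩⟩

lemma le_maxErase {n : ℕ} (hn : 2 ≤ n) {i j : Fin n} (hj : j ≠ i) (g : Fin n → ℝ) :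
    g j ≤ maxErase i g := by
  have hne : (((Finset.univ : Finset (Fin n)).erase i).image g).Nonempty :=
    (erase_univ_nonempty hn i).image g
  rw [maxErase, fsMax_eq_max' hne]
  exact Finset.le_max' _ _
    (Finset.mem_image_of_mem g (Finset.mem_erase.2 ⟨hj, Finset.mem_univ j⟩))

lemma maxErase_le {n : ℕ} (hn : 2 ≤ n) {i : Fin n} {g : Fin n → ℝ} {a : ℝ}
    (h : ∀ j, j ≠ i → g j ≤ a) : maxErase i g ≤ a := by
  have hne : (((Finset.univ : Finset (Fin n)).erase i).image g).Nonempty :=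
    (erase_univ_nonempty hn i).image g
  rw [maxErase, fsMax_eq_max' hne]
  apply Finset.max'_le
  intro x hx
  obtain ⟨j, hj, rfl⟩ := Finset.mem_image.1 hx
  exact h j (Finset.mem_erase.1 hj).1

lemma exists_maxErase {n : ℕ} (hn : 2 ≤ n) (i : Fin n) (g : Fin n → ℝ) :
    ∃ j, j ≠ i ∧ maxErase i g = g j := by
  have hne : (((Finset.univ : Finset (Fin n)).erase i).image g).Nonempty :=
    (erase_univ_nonempty hn i).image g
  have := Finset.max'_mem _ hne
  obtain ⟨j, hj, hjg⟩ := Finset.mem_image.1 this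
  exact ⟨j, (Finset.mem_erase.1 hj).1, by rw [maxErase, fsMax_eq_max' hne, hjg]⟩

lemma maxErase_congr {n : ℕ} {i : Fin n} {g g' : Fin n → ℝ}
    (h : ∀ j, j ≠ i → g j = g' j) : maxErase i g = maxErase i g' := by
  unfold maxErase
  congr 1
  apply Finset.image_congr
  intro j hj
  exact h j (Finset.mem_erase.1 (by exact_mod_cast hj)).1

lemma Uutil_update {n m : ℕ} (f w : Fin n → Fin m → ℝ) (i : Fin n) (w' : Fin m → ℝ) :
    Uutil f (Function.update w i w') i
      = ∑ q, (f i q * w' q - maxErase i (fun j => f j q * w j q) * w' q) := by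
  unfold Uutil
  refine Finset.sum_congr rfl fun q _ => ?_
  have hM : maxErase i (fun j => f j q * Function.update w i w' j q)
      = maxErase i (fun j => f j q * w j q) :=
    maxErase_congr fun j hj => by rw [Function.update_of_ne hj]
  rw [hM, Function.update_self]

/-- best-response at each coordinate -/
lemma nash_coord {n m : ℕ} (hn : 2 ≤ n) (f w : Fin n → Fin m → ℝ)
    (hw : InUnit w) (hN : IsNashW f w) (i : Fin n) (q : Fin m) (t : ℝ)
    (ht : t ∈ Set.Icc (0 : ℝ) 1) :
    (f i q - maxErase i (fun j => f j q * w j q)) * t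
      ≤ (f i q - maxErase i (fun j => f j q * w j q)) * w i q := by
  set w' : Fin m → ℝ := Function.update (w i) q t with hw'
  have hbd : ∀ q', w' q' ∈ Set.Icc (0 : ℝ) 1 := by
    intro q'
    by_cases h : q' = q
    · subst h; simpa [hw'] using ht
    · simpa [hw', Function.update_of_ne h] using hw i q'
  have h := hN i w' hbd
  rw [Uutil_update] at h
  unfold Uutil at h
  have hsplit : ∀ v : Fin m → ℝ,
      (∑ q', (f i q' * v q' - maxErase i (fun j => f j q' * w j q') * v q'))
        = (f i q * v q - maxErase i (fun j => f j q * w j q) * v q)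
          + ∑ q' ∈ Finset.univ.erase q,
              (f i q' * v q' - maxErase i (fun j => f j q' * w j q') * v q') := by
    intro v
    exact (Finset.add_sum_erase _ _ (Finset.mem_univ q)).symm
  rw [hsplit w', hsplit (w i)] at h
  have hrest : ∑ q' ∈ Finset.univ.erase q,
      (f i q' * w' q' - maxErase i (fun j => f j q' * w j q') * w' q')
      = ∑ q' ∈ Finset.univ.erase q,
      (f i q' * w i q' - maxErase i (fun j => f j q' * w j q') * w i q') := by
    refine Finset.sum_congr rfl fun q' hq' => ?_
    rw [hw', Function.update_of_ne (Finset.mem_erase.1 hq').1]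
  rw [hrest] at h
  have h2 : f i q * w' q - maxErase i (fun j => f j q * w j q) * w' q
      ≤ f i q * w i q - maxErase i (fun j => f j q * w j q) * w i q := by linarith
  have : w' q = t := by rw [hw', Function.update_self]
  rw [this] at h2
  nlinarith [h2]

theorem nash_weight_game_unique {n m : ℕ} (hn : 2 ≤ n) (f : Fin n → Fin m → ℝ)
    (hf : ∀ i q, 0 ≤ f i q)
    (istar : Fin m → Fin n)
    (hstar : ∀ q, ∀ j, j ≠ istar q → f j q < f (istar q) q) :
    (InUnit (fun i q => if i = istar q then (1 : ℝ) else 0) ∧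
      IsNashW f (fun i q => if i = istar q then (1 : ℝ) else 0)) ∧
      ∀ w : Fin n → Fin m → ℝ, InUnit w → IsNashW f w →
        w = fun i q => if i = istar q then (1 : ℝ) else 0 := by
  set What : Fin n → Fin m → ℝ := fun i q => if i = istar q then (1 : ℝ) else 0 with hWhat
  have hUnit : InUnit What := by
    intro i q
    by_cases h : i = istar q <;> simp [hWhat, h]
  have hMhat : ∀ i q, maxErase i (fun j => f j q * What j q)
      = if i = istar q then 0 else f (istar q) q := by
    intro i q
    by_cases h : i = istar q
    · rw [if_pos h]
      apply le_antisymm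
      · apply maxErase_le hn
        intro j hj
        rw [hWhat]
        simp only []
        rw [if_neg (h ▸ hj)]
        simp
      · obtain ⟨j, hj⟩ := erase_univ_nonempty hn i
        have hji : j ≠ i := (Finset.mem_erase.1 hj).1
        have := le_maxErase hn hji (fun j => f j q * What j q)
        have hz : f j q * What j q = 0 := by
          rw [hWhat]; simp only []; rw [if_neg (h ▸ hji)]; ring
        linarith [hz ▸ this]
    · rw [if_neg h]
      apply le_antisymm
      · apply maxErase_le hn
        intro j hj
        by_cases hjq : j = istar q
        · rw [hWhat]; simp only []; rw [if_pos hjq, hjq]; ring_nf; exact le_refl _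
        · rw [hWhat]; simp only []; rw [if_neg hjq]
          have := hf (istar q) q
          nlinarith
      · have hne : istar q ≠ i := fun hc => h hc.symm
        have := le_maxErase hn hne (fun j => f j q * What j q)
        have h1 : f (istar q) q * What (istar q) q = f (istar q) q := by
          rw [hWhat]; simp
        linarith [h1 ▸ this]
  have hNash : IsNashW f What := by
    intro i w' hw'
    rw [Uutil_update]
    unfold Uutil
    apply Finset.sum_le_sum
    intro q _
    rw [hMhat i q]
    by_cases h : i = istar q
    · rw [if_pos h]
      have h1 : What i q = 1 := by rw [hWhat]; simp [h]
      rw [h1]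
      have := hw' q
      have hfi := hf i q
      simp only [Set.mem_Icc] at this
      nlinarith
    · rw [if_neg h]
      have h0 : What i q = 0 := by rw [hWhat]; simp [h]
      rw [h0]
      have := hw' q
      simp only [Set.mem_Icc] at this
      have hlt := hstar q i h
      nlinarith
  refine ⟨⟨hUnit, hNash⟩, ?_⟩
  intro w hw hN
  funext i q
  -- first, w (istar q) q = 1
  have hk1 : w (istar q) q = 1 := by
    set k := istar q with hk
    have hMlt : maxErase k (fun j => f j q * w j q) < f k q := by
      obtain ⟨j, hj, hje⟩ := exists_maxErase hn k (fun j => f j q * w j q)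
      rw [hje]
      have hbd := hw j q
      simp only [Set.mem_Icc] at hbd
      have := hstar q j hj
      nlinarith [hf j q]
    have hc := nash_coord hn f w hw hN k q 1 (by norm_num)
    have hbd := hw k q
    simp only [Set.mem_Icc] at hbd
    nlinarith
  show w i q = What i q
  by_cases h : i = istar q
  · rw [hWhat]; simp only []; rw [if_pos h, h, hk1]
  · rw [hWhat]; simp only []; rw [if_neg h]
    have hMge : f (istar q) q ≤ maxErase i (fun j => f j q * w j q) := by
      have hne : istar q ≠ i := fun hc => h hc.symm
      have := le_maxErase hn hne (fun j => f j q * w j q)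
      rw [hk1] at this
      linarith [this]
    have hc := nash_coord hn f w hw hN i q 0 (by norm_num)
    have hbd := hw i q
    simp only [Set.mem_Icc] at hbd
    have hlt := hstar q i h
    nlinarith
end

section
/- Suppose n ≥ 2 and agent i is dominating for task q. Then: (a) for every matrix w : Fin n → Fin m → ℝ with all entries in [0,1], f i q − max_{j ≠ i} (f j q * w j q) ≥ 0; and (b) along any PBRAG trajectory W, the sequence t ↦ W t i q is monotone nondecreasing and converges to a limit in [0,1]. -/
open Finset Filter

noncomputable def clamp (x : ℝ) : ℝ := max 0 (min x 1)

/-- One step of the projected best-response ascending gradient dynamics. -/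
noncomputable def pbrag {n m : ℕ} (f γ : Fin n → Fin m → ℝ)
    (w : Fin n → Fin m → ℝ) : Fin n → Fin m → ℝ :=
  fun i q => clamp (w i q + γ i q * (f i q - maxErase i (fun j => f j q * w j q)))


lemma fsMax_le' {s : Finset ℝ} {b : ℝ} (hb : 0 ≤ b) (h : ∀ x ∈ s, x ≤ b) :
    fsMax s ≤ b := by
  unfold fsMax
  cases hs : s.max with
  | bot => simpa using hb
  | coe a =>
    have ha := Finset.mem_of_max hs
    simpa using h a ha

lemma clamp_mem : ∀ x : ℝ, clamp x ∈ Set.Icc (0 : ℝ) 1 := by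
  intro x
  unfold clamp
  constructor
  · exact le_max_left _ _
  · exact max_le (by norm_num) (min_le_right _ _)

lemma clamp_of_mem {x : ℝ} (hx : x ∈ Set.Icc (0 : ℝ) 1) : clamp x = x := by
  unfold clamp
  rw [min_eq_left hx.2, max_eq_right hx.1]

lemma clamp_mono : Monotone clamp := fun a b hab =>
  max_le_max le_rfl (min_le_min hab le_rfl)

theorem pbrag_dominating_monotone {n m : ℕ} (hn : 2 ≤ n) (f : Fin n → Fin m → ℝ)
    (hf : ∀ i q, 0 ≤ f i q)
    (γ : Fin n → Fin m → ℝ) (hγ : ∀ i q, 0 < γ i q)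
    (i : Fin n) (q : Fin m) (hdom : Dominating f i q)
    (W : ℕ → Fin n → Fin m → ℝ)
    (hW0 : InUnit (W 0)) (hWs : ∀ t, W (t + 1) = pbrag f γ (W t)) :
    (∀ w : Fin n → Fin m → ℝ, InUnit w →
        0 ≤ f i q - maxErase i (fun j => f j q * w j q)) ∧
      (Monotone (fun t => W t i q) ∧
        ∃ L ∈ Set.Icc (0 : ℝ) 1,
          Tendsto (fun t => W t i q) atTop (nhds L)) := by
  
  have key : ∀ w : Fin n → Fin m → ℝ, InUnit w →
      0 ≤ f i q - maxErase i (fun j => f j q * w j q) := by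
    intro w hw
    have : maxErase i (fun j => f j q * w j q) ≤ f i q := by
      apply fsMax_le' (hf i q)
      intro x hx
      simp only [Finset.mem_image, Finset.mem_erase] at hx
      obtain ⟨j, hj, rfl⟩ := hx
      calc f j q * w j q ≤ f j q * 1 := by
            exact mul_le_mul_of_nonneg_left (hw j q).2 (hf j q)
        _ = f j q := mul_one _
        _ ≤ f i q := hdom j
    linarith
  have hUnit : ∀ t, InUnit (W t) := by
    intro t
    induction t with
    | zero => exact hW0
    | succ t ih =>
      intro j r
      rw [hWs t]
      exact clamp_mem _
  have hstep : ∀ t, W t i q ≤ W (t + 1) i q := by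
    intro t
    rw [hWs t]
    have h1 : W t i q = clamp (W t i q) := (clamp_of_mem (hUnit t i q)).symm
    calc W t i q = clamp (W t i q) := h1
      _ ≤ _ := by
        apply clamp_mono
        have := mul_nonneg (hγ i q).le (key (W t) (hUnit t))
        linarith
  have hmono : Monotone (fun t => W t i q) := monotone_nat_of_le_succ hstep
  refine ⟨key, hmono, ?_⟩
  have hbdd : BddAbove (Set.range fun t => W t i q) :=
    ⟨1, by rintro x ⟨t, rfl⟩; exact (hUnit t i q).2⟩
  have htend := tendsto_atTop_ciSup hmono hbdd
  refine ⟨_, ⟨?_, ?_⟩, htend⟩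
  · exact le_trans (hUnit 0 i q).1 (le_ciSup hbdd 0)
  · exact ciSup_le fun t => (hUnit t i q).2
end
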